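/- The L² distance between kernel density estimates is an instance of the MMD: for points x_1, …, x_n and y_1, …, y_m in ℝ^d, ∫_{ℝ^d} ( (1/n) Σ_{i=1}^n κ(x_i − z) − (1/m) Σ_{j=1}^m κ(y_j − z) )² dz = (1/n²) Σ_{i,j} k(x_i, x_j) + (1/m²) Σ_{i,j} k(y_i, y_j) − (2/(nm)) Σ_{i,j} k(x_i, y_j), where k(x, y) := ∫_{ℝ^d} κ(x − z) κ(y − z) dz. -/

import Mathlib

open MeasureTheory
open scoped RealInnerProductSpace

/-- **The `L²` distance between kernel density estimates is an instance of the
MMD:** for samples `x₁, …, xₙ` and `y₁, …, y_m` in `ℝ^d`,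
`∫ ((1/n) Σᵢ κ(xᵢ − z) − (1/m) Σⱼ κ(yⱼ − z))² dz
  = (1/n²) Σᵢⱼ k(xᵢ, xⱼ) + (1/m²) Σᵢⱼ k(yᵢ, yⱼ) − (2/(nm)) Σᵢⱼ k(xᵢ, yⱼ)`,
where `k(x, y) = ∫ κ(x − z) κ(y − z) dz`. -/
theorem L2_dist_kde_eq_mmd
    {d : ℕ} (κ : EuclideanSpace ℝ (Fin d) → ℝ)
    (hκm : Measurable κ) (hκ2 : MemLp κ 2 (volume : Measure (EuclideanSpace ℝ (Fin d))))
    (n m : ℕ)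
    (x : Fin n → EuclideanSpace ℝ (Fin d)) (y : Fin m → EuclideanSpace ℝ (Fin d))
    (k : EuclideanSpace ℝ (Fin d) → EuclideanSpace ℝ (Fin d) → ℝ)
    (hk : ∀ a b, k a b = ∫ z, κ (a - z) * κ (b - z)) :
    (∫ z, ((n : ℝ)⁻¹ * (∑ i, κ (x i - z)) - (m : ℝ)⁻¹ * ∑ j, κ (y j - z)) ^ 2)
      = ((n : ℝ) ^ 2)⁻¹ * (∑ i, ∑ j, k (x i) (x j))
        + ((m : ℝ) ^ 2)⁻¹ * (∑ i, ∑ j, k (y i) (y j))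
        - 2 / ((n : ℝ) * m) * ∑ i, ∑ j, k (x i) (y j) := by
  -- each translate-reflect of κ is in L²
  have hg : ∀ a : EuclideanSpace ℝ (Fin d),
      MemLp (fun z => κ (a - z)) 2 (volume : Measure (EuclideanSpace ℝ (Fin d))) := by
    intro a
    exact hκ2.comp_measurePreserving (Measure.measurePreserving_sub_left volume a)
  -- products of two such functions are integrable (Hölder / Cauchy–Schwarz)
  have hint : ∀ a b : EuclideanSpace ℝ (Fin d),
      Integrable (fun z => κ (a - z) * κ (b - z))
        (volume : Measure (EuclideanSpace ℝ (Fin d))) := by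
    intro a b
    have h := (hg b).smul (φ := fun z => κ (a - z)) (hg a)
      (p := 2) (q := 2) (r := 1) (hpqr := ⟨by norm_num [ENNReal.inv_two_add_inv_two]⟩)
    rw [memLp_one_iff_integrable] at h
    exact h
  have I1 : Integrable (fun z => ∑ i : Fin n, ∑ j : Fin n, κ (x i - z) * κ (x j - z))
      (volume : Measure (EuclideanSpace ℝ (Fin d))) :=
    integrable_finset_sum _ fun i _ => integrable_finset_sum _ fun j _ => hint _ _
  have I2 : Integrable (fun z => ∑ i : Fin m, ∑ j : Fin m, κ (y i - z) * κ (y j - z))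
      (volume : Measure (EuclideanSpace ℝ (Fin d))) :=
    integrable_finset_sum _ fun i _ => integrable_finset_sum _ fun j _ => hint _ _
  have I3 : Integrable (fun z => ∑ i : Fin n, ∑ j : Fin m, κ (x i - z) * κ (y j - z))
      (volume : Measure (EuclideanSpace ℝ (Fin d))) :=
    integrable_finset_sum _ fun i _ => integrable_finset_sum _ fun j _ => hint _ _
  have key : ∀ z : EuclideanSpace ℝ (Fin d),
      ((n : ℝ)⁻¹ * (∑ i, κ (x i - z)) - (m : ℝ)⁻¹ * ∑ j, κ (y j - z)) ^ 2
        = ((n : ℝ) ^ 2)⁻¹ * (∑ i : Fin n, ∑ j : Fin n, κ (x i - z) * κ (x j - z))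
          + ((m : ℝ) ^ 2)⁻¹ * (∑ i : Fin m, ∑ j : Fin m, κ (y i - z) * κ (y j - z))
          - 2 / ((n : ℝ) * m) * ∑ i : Fin n, ∑ j : Fin m, κ (x i - z) * κ (y j - z) := by
    intro z
    rw [← Finset.sum_mul_sum, ← Finset.sum_mul_sum, ← Finset.sum_mul_sum]
    ring
  calc (∫ z, ((n : ℝ)⁻¹ * (∑ i, κ (x i - z)) - (m : ℝ)⁻¹ * ∑ j, κ (y j - z)) ^ 2)
      = ∫ z, (((n : ℝ) ^ 2)⁻¹ * (∑ i : Fin n, ∑ j : Fin n, κ (x i - z) * κ (x j - z))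
          + ((m : ℝ) ^ 2)⁻¹ * (∑ i : Fin m, ∑ j : Fin m, κ (y i - z) * κ (y j - z))
          - 2 / ((n : ℝ) * m) * ∑ i : Fin n, ∑ j : Fin m, κ (x i - z) * κ (y j - z)) := by
        exact integral_congr_ae (Filter.Eventually.of_forall key)
    _ = ((n : ℝ) ^ 2)⁻¹ * (∫ z, ∑ i : Fin n, ∑ j : Fin n, κ (x i - z) * κ (x j - z))
          + ((m : ℝ) ^ 2)⁻¹ * (∫ z, ∑ i : Fin m, ∑ j : Fin m, κ (y i - z) * κ (y j - z))
          - 2 / ((n : ℝ) * m) * ∫ z, ∑ i : Fin n, ∑ j : Fin m, κ (x i - z) * κ (y j - z) := by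
        have hA : Integrable (fun z =>
            ((n : ℝ) ^ 2)⁻¹ * (∑ i : Fin n, ∑ j : Fin n, κ (x i - z) * κ (x j - z))
              + ((m : ℝ) ^ 2)⁻¹ * (∑ i : Fin m, ∑ j : Fin m, κ (y i - z) * κ (y j - z)))
            (volume : Measure (EuclideanSpace ℝ (Fin d))) :=
          (I1.const_mul _).add (I2.const_mul _)
        rw [integral_sub hA (I3.const_mul _),
          integral_add (I1.const_mul _) (I2.const_mul _),
          integral_const_mul, integral_const_mul, integral_const_mul]
    _ = ((n : ℝ) ^ 2)⁻¹ * (∑ i, ∑ j, k (x i) (x j))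
          + ((m : ℝ) ^ 2)⁻¹ * (∑ i, ∑ j, k (y i) (y j))
          - 2 / ((n : ℝ) * m) * ∑ i, ∑ j, k (x i) (y j) := by
        rw [integral_finset_sum _ fun i _ => integrable_finset_sum _ fun j _ => hint _ _,
          integral_finset_sum _ fun i _ => integrable_finset_sum _ fun j _ => hint _ _,
          integral_finset_sum _ fun i _ => integrable_finset_sum _ fun j _ => hint _ _]
        congr 1
        · congr 1
          · congr 1
            refine Finset.sum_congr rfl fun i _ => ?_
            rw [integral_finset_sum _ fun j _ => hint _ _]
            exact Finset.sum_congr rfl fun j _ => (hk _ _).symm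
          · congr 1
            refine Finset.sum_congr rfl fun i _ => ?_
            rw [integral_finset_sum _ fun j _ => hint _ _]
            exact Finset.sum_congr rfl fun j _ => (hk _ _).symm
        · congr 1
          refine Finset.sum_congr rfl fun i _ => ?_
          rw [integral_finset_sum _ fun j _ => hint _ _]
          exact Finset.sum_congr rfl fun j _ => (hk _ _).symm
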